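/- Define the sequence (a_n) by a_0 = p and a_{n+1} = (g∘g)(a_n). Then (a_n) is nondecreasing and converges; its limit w' lies in (0,1), is a fixed point of g∘g, and satisfies w' ≤ γ for every fixed point γ of g∘g in (0,1]. In particular, g∘g has a smallest fixed point in (0,1], namely w'. -/
import Mathlib


/-- the iterates a₀ = p, a_{n+1} = (g∘g)(a_n) are nondecreasing and converge
to a limit w' ∈ (0,1) which is the smallest fixed point of g∘g in (0,1]. -/
theorem gg_smallest_fixed_point
    (χ : ℕ → ℝ) (hχ_nonneg : ∀ m, 0 ≤ χ m) (hχ_sum : ∑' m, χ m = 1) (hχ0 : χ 0 < 1)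
    (p q : ℝ) (hp : 0 ≤ p) (hq : 0 ≤ q) (hpq0 : 0 < p + q) (hpq1 : p + q < 1)
    (G : ℝ → ℝ) (hG : ∀ x, G x = ∑' m, χ m * x ^ m)
    (g : ℝ → ℝ) (hg : ∀ x, g x = (1 - q) - (1 - p - q) * G x)
    (a : ℕ → ℝ) (ha0 : a 0 = p) (ha : ∀ n, a (n + 1) = (g ∘ g) (a n)) :
    Monotone a ∧
      ∃ w', Filter.Tendsto a Filter.atTop (nhds w') ∧
        w' ∈ Set.Ioo (0 : ℝ) 1 ∧ (g ∘ g) w' = w' ∧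
        ∀ γ ∈ Set.Ioc (0 : ℝ) 1, (g ∘ g) γ = γ → w' ≤ γ := by
  have hpq' : 0 < 1 - p - q := by linarith
  have hχsummable : Summable χ := by
    by_contra h
    rw [tsum_eq_zero_of_not_summable h] at hχ_sum
    norm_num at hχ_sum
  have hsumx : ∀ x : ℝ, 0 ≤ x → x ≤ 1 → Summable (fun m => χ m * x ^ m) := by
    intro x hx0 hx1
    refine Summable.of_nonneg_of_le
      (fun m => mul_nonneg (hχ_nonneg m) (pow_nonneg hx0 m)) (fun m => ?_) hχsummable
    calc χ m * x ^ m ≤ χ m * 1 :=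
          mul_le_mul_of_nonneg_left (pow_le_one₀ hx0 hx1) (hχ_nonneg m)
    _ = χ m := mul_one _
  have hG1 : G 1 = 1 := by rw [hG]; simpa using hχ_sum
  have hG0 : ∀ x : ℝ, 0 ≤ x → 0 ≤ G x := by
    intro x hx0
    rw [hG]
    exact tsum_nonneg fun m => mul_nonneg (hχ_nonneg m) (pow_nonneg hx0 m)
  have hGmono : ∀ x y : ℝ, 0 ≤ x → x ≤ y → y ≤ 1 → G x ≤ G y := by
    intro x y hx0 hxy hy1
    rw [hG, hG]
    exact Summable.tsum_le_tsum
      (fun m => mul_le_mul_of_nonneg_left (pow_le_pow_left₀ hx0 hxy m) (hχ_nonneg m))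
      (hsumx x hx0 (hxy.trans hy1)) (hsumx y (hx0.trans hxy) hy1)
  have hGle1 : ∀ x : ℝ, 0 ≤ x → x ≤ 1 → G x ≤ 1 := fun x hx0 hx1 =>
    (hGmono x 1 hx0 hx1 le_rfl).trans_eq hG1
  obtain ⟨m₀, hm₀pos, hχm₀⟩ : ∃ m, 0 < m ∧ 0 < χ m := by
    by_contra h
    push_neg at h
    have h0 : ∀ m, m ≠ 0 → χ m = 0 := fun m hm =>
      le_antisymm (h m (Nat.pos_of_ne_zero hm)) (hχ_nonneg m)
    rw [tsum_eq_single 0 h0] at hχ_sum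
    linarith
  have hGlt1 : ∀ x : ℝ, 0 ≤ x → x < 1 → G x < 1 := by
    intro x hx0 hx1
    have hs := hsumx x hx0 hx1.le
    have hsub : Summable (fun m => χ m - χ m * x ^ m) := hχsummable.sub hs
    have h1 : 1 - G x = ∑' m, (χ m - χ m * x ^ m) := by
      rw [hG, Summable.tsum_sub hχsummable hs, hχ_sum]
    have hterm : χ m₀ - χ m₀ * x ^ m₀ ≤ ∑' m, (χ m - χ m * x ^ m) := by
      refine Summable.le_tsum hsub m₀ (fun i _ => sub_nonneg.mpr ?_)
      calc χ i * x ^ i ≤ χ i * 1 :=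
            mul_le_mul_of_nonneg_left (pow_le_one₀ hx0 hx1.le) (hχ_nonneg i)
      _ = χ i := mul_one _
    have hxm : x ^ m₀ < 1 := pow_lt_one₀ hx0 hx1 hm₀pos.ne'
    nlinarith
  have hGpos : ∀ x : ℝ, 0 < x → x ≤ 1 → 0 < G x := by
    intro x hx0 hx1
    have hterm : χ m₀ * x ^ m₀ ≤ G x := by
      rw [hG]
      exact Summable.le_tsum (hsumx x hx0.le hx1) m₀
        (fun i _ => mul_nonneg (hχ_nonneg i) (pow_nonneg hx0.le i))
    have : 0 < χ m₀ * x ^ m₀ := mul_pos hχm₀ (pow_pos hx0 m₀)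
    linarith
  have hgmem : ∀ x : ℝ, 0 ≤ x → x ≤ 1 → p ≤ g x ∧ g x ≤ 1 - q := by
    intro x hx0 hx1
    rw [hg]
    constructor
    · nlinarith [hGle1 x hx0 hx1]
    · nlinarith [hG0 x hx0]
  have hmem01 : ∀ x : ℝ, 0 ≤ x → x ≤ 1 → 0 ≤ g x ∧ g x ≤ 1 := fun x hx0 hx1 =>
    ⟨hp.trans (hgmem x hx0 hx1).1, (hgmem x hx0 hx1).2.trans (by linarith)⟩
  have hganti : ∀ x y : ℝ, 0 ≤ x → x ≤ y → y ≤ 1 → g y ≤ g x := by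
    intro x y hx0 hxy hy1
    rw [hg, hg]
    nlinarith [hGmono x y hx0 hxy hy1]
  have hggmono : ∀ x y : ℝ, 0 ≤ x → x ≤ y → y ≤ 1 → g (g x) ≤ g (g y) := by
    intro x y hx0 hxy hy1
    have h1 := hmem01 x hx0 (hxy.trans hy1)
    have h2 := hmem01 y (hx0.trans hxy) hy1
    exact hganti (g y) (g x) h2.1 (hganti x y hx0 hxy hy1) h1.2
  have hggmem : ∀ x : ℝ, 0 ≤ x → x ≤ 1 → p ≤ g (g x) ∧ g (g x) ≤ 1 - q := by
    intro x hx0 hx1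
    have h1 := hmem01 x hx0 hx1
    exact hgmem (g x) h1.1 h1.2
  have key : ∀ n, (0 ≤ a n ∧ a n ≤ 1) ∧ a n ≤ a (n + 1) := by
    intro n
    induction n with
    | zero =>
      refine ⟨⟨ha0 ▸ hp, ha0 ▸ (by linarith)⟩, ?_⟩
      rw [ha0, ha 0, Function.comp_apply, ha0]
      exact (hggmem p hp (by linarith)).1
    | succ n ih =>
      have hmem := ih.1
      have hle := ih.2
      have hmemn1 : 0 ≤ a (n + 1) ∧ a (n + 1) ≤ 1 := by
        rw [ha n, Function.comp_apply]
        have := hggmem (a n) hmem.1 hmem.2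
        constructor <;> linarith
      refine ⟨hmemn1, ?_⟩
      rw [ha n, ha (n + 1), Function.comp_apply, Function.comp_apply]
      exact hggmono (a n) (a (n + 1)) hmem.1 hle hmemn1.2
  have hmono : Monotone a := monotone_nat_of_le_succ fun n => (key n).2
  have hbdd : BddAbove (Set.range a) := ⟨1, by rintro _ ⟨n, rfl⟩; exact (key n).1.2⟩
  set w' := ⨆ n, a n with hw'
  have hlim : Filter.Tendsto a Filter.atTop (nhds w') := tendsto_atTop_ciSup hmono hbdd
  have hw'mem : 0 ≤ w' ∧ w' ≤ 1 :=
    ⟨(key 0).1.1.trans (le_ciSup hbdd 0), ciSup_le fun n => (key n).1.2⟩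
  have hGcont : ContinuousOn G (Set.Icc (0 : ℝ) 1) := by
    have hc : ContinuousOn (fun x : ℝ => ∑' m, χ m * x ^ m) (Set.Icc (0 : ℝ) 1) := by
      apply continuousOn_tsum (u := χ)
      · intro m; exact (continuous_const.mul (continuous_pow m)).continuousOn
      · exact hχsummable
      · intro m x hx
        rw [Real.norm_eq_abs, abs_of_nonneg (mul_nonneg (hχ_nonneg m) (pow_nonneg hx.1 m))]
        calc χ m * x ^ m ≤ χ m * 1 :=
              mul_le_mul_of_nonneg_left (pow_le_one₀ hx.1 hx.2) (hχ_nonneg m)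
        _ = χ m := mul_one _
    exact hc.congr fun x _ => hG x
  have hgcont : ContinuousOn g (Set.Icc (0 : ℝ) 1) := by
    have hc : ContinuousOn (fun x => (1 - q) - (1 - p - q) * G x) (Set.Icc (0 : ℝ) 1) :=
      continuousOn_const.sub (continuousOn_const.mul hGcont)
    exact hc.congr fun x _ => hg x
  have hggcont : ContinuousOn (g ∘ g) (Set.Icc (0 : ℝ) 1) :=
    hgcont.comp hgcont (fun x hx => Set.mem_Icc.mpr (hmem01 x hx.1 hx.2))
  have hafix : (g ∘ g) w' = w' := by
    have h1 : Filter.Tendsto a Filter.atTop (nhdsWithin w' (Set.Icc (0 : ℝ) 1)) :=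
      tendsto_nhdsWithin_of_tendsto_nhds_of_eventually_within a hlim
        (Filter.Eventually.of_forall fun n => Set.mem_Icc.mpr (key n).1)
    have h2 : Filter.Tendsto (fun n => (g ∘ g) (a n)) Filter.atTop (nhds ((g ∘ g) w')) :=
      (hggcont w' (Set.mem_Icc.mpr hw'mem)).tendsto.comp h1
    have h3 : Filter.Tendsto (fun n => a (n + 1)) Filter.atTop (nhds w') :=
      hlim.comp (Filter.tendsto_add_atTop_nat 1)
    have h4 : (fun n => (g ∘ g) (a n)) = fun n => a (n + 1) := funext fun n => (ha n).symm
    rw [h4] at h2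
    exact tendsto_nhds_unique h2 h3
  have hgp_lt1 : g p < 1 := by
    rcases eq_or_lt_of_le hp with h | h
    · have hq' : 0 < q := by nlinarith
      have := (hgmem p hp (by linarith)).2
      linarith
    · have hGp : 0 < G p := hGpos p h (by linarith)
      rw [hg]
      nlinarith
  have hw'pos : 0 < w' := by
    have ha1 : a 1 = g (g p) := by rw [ha 0, Function.comp_apply, ha0]
    have ha1le : a 1 ≤ w' := le_ciSup hbdd 1
    have hgp := hmem01 p hp (by linarith)
    have hgg0 : 0 < g (g p) := by
      rw [hg (g p)]
      have := hGlt1 (g p) hgp.1 hgp_lt1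
      nlinarith
    rw [ha1] at ha1le
    linarith
  have hw'lt1 : w' < 1 := by
    rcases lt_or_eq_of_le hw'mem.2 with h | h
    · exact h
    · exfalso
      have hfix1 : g (g 1) = 1 := by
        have := hafix
        rw [h] at this
        exact this
      have hg1 : g 1 = p := by rw [hg, hG1]; ring
      rw [hg1] at hfix1
      linarith
  refine ⟨hmono, w', hlim, ⟨hw'pos, hw'lt1⟩, hafix, ?_⟩
  intro γ hγ hfix
  have hγ0 : 0 ≤ γ := hγ.1.le
  have hle : ∀ n, a n ≤ γ := by
    intro n
    induction n with
    | zero =>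
      rw [ha0, ← hfix, Function.comp_apply]
      exact (hggmem γ hγ0 hγ.2).1
    | succ n ih =>
      rw [ha n, Function.comp_apply]
      calc g (g (a n)) ≤ g (g γ) := hggmono (a n) γ (key n).1.1 ih hγ.2
      _ = γ := hfix
  exact ciSup_le hle
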